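/- Let l be a prime and N a torsion-free abelian group such that N/lN is finite. If y₁, …, y_r are elements of N whose images form a basis of N/lN as an 𝔽_l-vector space, then for every n ≥ 1 the quotient N/lⁿN is a free ℤ/lⁿℤ-module with basis the images of y₁, …, y_r; in particular N/lⁿN has order l^{nr}. -/

import Mathlib

universe u

/-- The subgroup `nN = {n • x : x ∈ N}` of an abelian group `N`. -/
def smulRange (n : ℕ) (N : Type u) [AddCommGroup N] : AddSubgroup N where
  carrier := Set.range fun x : N => n • x
  zero_mem' := ⟨0, smul_zero n⟩
  add_mem' := by rintro _ _ ⟨a, rfl⟩ ⟨b, rfl⟩; exact ⟨a + b, smul_add n a b⟩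
  neg_mem' := by rintro _ ⟨a, rfl⟩; exact ⟨-a, smul_neg n a⟩

/-- `N/nN` is naturally a module over `ℤ/nℤ`. -/
noncomputable instance (n : ℕ) (N : Type u) [AddCommGroup N] :
    Module (ZMod n) (N ⧸ smulRange n N) :=
  QuotientAddGroup.zmodModule fun x => ⟨x, rfl⟩

lemma mem_smulRange {N : Type u} [AddCommGroup N] {m : ℕ} {x : N} :
    x ∈ smulRange m N ↔ ∃ z : N, m • z = x := Iff.rfl

lemma cast_smul_quot {N : Type u} [AddCommGroup N] (m : ℕ) (c : ℤ)
    (q : N ⧸ smulRange m N) : ((c : ZMod m)) • q = c • q :=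
  Int.cast_smul_eq_zsmul _ _ _

/-- Let `l` be a prime and `N` a torsion-free abelian group with
`N/lN` finite.  If `y₁, …, y_r` are elements of `N` whose images form a basis of `N/lN`
as an `𝔽_l`-vector space, then for every `n ≥ 1` the quotient `N/lⁿN` is a free
`ℤ/lⁿℤ`-module with basis the images of `y₁, …, y_r`; in particular `N/lⁿN` has
order `l^(n·r)`. -/
theorem quotient_lpow_free_over_zmod
    {N : Type u} [AddCommGroup N]
    (htf : ∀ (n : ℕ) (x : N), 1 ≤ n → n • x = 0 → x = 0)
    (l : ℕ) (hl : l.Prime) (hfin : Finite (N ⧸ smulRange l N))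
    (r : ℕ) (y : Fin r → N)
    (b : Module.Basis (Fin r) (ZMod l) (N ⧸ smulRange l N))
    (hb : ∀ i, b i = (QuotientAddGroup.mk (y i) : N ⧸ smulRange l N))
    (n : ℕ) (hn : 1 ≤ n) :
    (∃ c : Module.Basis (Fin r) (ZMod (l ^ n)) (N ⧸ smulRange (l ^ n) N),
      ∀ i, c i = (QuotientAddGroup.mk (y i) : N ⧸ smulRange (l ^ n) N)) ∧
    Nat.card (N ⧸ smulRange (l ^ n) N) = l ^ (n * r) := by
  classical
  have e1 : ∀ (k : ℕ) (v : N), k • v = (k : ℤ) • v := fun k v => (natCast_zsmul v k).symm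
  set π : N →+ N ⧸ smulRange l N := QuotientAddGroup.mk' (smulRange l N) with hπ
  -- n = 1 decomposition
  have key1 : ∀ x : N, ∃ (c : Fin r → ℤ) (z : N), x = (∑ i, c i • y i) + l • z := by
    intro x
    choose c hc using fun i => ZMod.intCast_surjective (b.repr (π x) i)
    have hsum : π (∑ i, c i • y i) = π x := by
      rw [map_sum]
      have h : ∀ i, π (c i • y i) = b.repr (π x) i • b i := by
        intro i
        rw [map_zsmul, hb i, ← hc i, cast_smul_quot]
        rfl
      simp_rw [h]
      exact b.sum_repr (π x)
    have hmem : x - ∑ i, c i • y i ∈ smulRange l N := by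
      have h0 : π (x - ∑ i, c i • y i) = 0 := by rw [map_sub, hsum, sub_self]
      exact (QuotientAddGroup.eq_zero_iff _).mp h0
    obtain ⟨z, hz⟩ := hmem
    have hz' : l • z = x - ∑ i, c i • y i := hz
    exact ⟨c, z, by rw [hz']; abel⟩
  -- general decomposition
  have key : ∀ m : ℕ, ∀ x : N, ∃ (c : Fin r → ℤ) (z : N),
      x = (∑ i, c i • y i) + l ^ m • z := by
    intro m
    induction m with
    | zero => exact fun x => ⟨0, x, by simp⟩
    | succ m ih =>
      intro x
      obtain ⟨c, z, hz⟩ := ih x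
      obtain ⟨d, w, hw⟩ := key1 z
      refine ⟨fun i => c i + (l : ℤ) ^ m * d i, w, ?_⟩
      rw [hz, hw, e1, e1, e1, smul_add, smul_smul, Finset.smul_sum]
      simp_rw [smul_smul, add_smul]
      rw [Finset.sum_add_distrib]
      have hc : ((l ^ (m + 1) : ℕ) : ℤ) = ((l ^ m : ℕ) : ℤ) * ((l : ℕ) : ℤ) := by
        push_cast; ring
      have hc2 : ∀ i, ((l ^ m : ℕ) : ℤ) * d i = (l : ℤ) ^ m * d i := by
        intro i; push_cast; ring
      simp_rw [hc, hc2]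
      abel
  -- divisibility (injectivity) key
  have inj : ∀ m : ℕ, ∀ c : Fin r → ℤ,
      (∑ i, c i • y i) ∈ smulRange (l ^ m) N → ∀ i, (l : ℤ) ^ m ∣ c i := by
    intro m
    induction m with
    | zero => intro c _ i; simpa using one_dvd _
    | succ m ih =>
      intro c hc
      obtain ⟨z, hz⟩ := hc
      have hz' : l ^ (m + 1) • z = ∑ i, c i • y i := hz
      clear hz
      -- reduce mod l
      have hmod : ∀ i, ((c i : ZMod l)) = 0 := by
        have h0 : ∑ i, ((c i : ZMod l)) • b i = 0 := by
          have : π (∑ i, c i • y i) = 0 := by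
            rw [← hz']
            refine (QuotientAddGroup.eq_zero_iff _).mpr ?_
            refine ⟨l ^ m • z, ?_⟩
            show l • l ^ m • z = l ^ (m + 1) • z
            rw [← mul_smul, ← pow_succ']
          rw [map_sum] at this
          simp_rw [map_zsmul] at this
          calc ∑ i, ((c i : ZMod l)) • b i
              = ∑ i, c i • π (y i) := by
                refine Finset.sum_congr rfl fun i _ => ?_
                rw [hb i, cast_smul_quot]; rfl
            _ = 0 := this
        have hli := b.linearIndependent
        exact fun i => Fintype.linearIndependent_iff.mp hli _ h0 i
      have hdvd : ∀ i, (l : ℤ) ∣ c i := fun i =>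
        (ZMod.intCast_zmod_eq_zero_iff_dvd _ _).mp (hmod i)
      choose d hd using hdvd
      have hzz : ∑ i, d i • y i = l ^ m • z := by
        have hl1 : 1 ≤ l := hl.one_lt.le
        refine sub_eq_zero.mp (htf l _ hl1 ?_)
        rw [e1, smul_sub, Finset.smul_sum]
        simp_rw [smul_smul, ← hd]
        rw [sub_eq_zero, ← hz', e1 (l ^ (m + 1)), e1 (l ^ m), smul_smul]
        congr 1
        push_cast
        ring
      have := ih d ⟨z, hzz.symm⟩
      intro i
      rw [hd i, pow_succ']
      exact mul_dvd_mul_left _ (this i)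
  -- build the basis
  set π' : N →+ N ⧸ smulRange (l ^ n) N := QuotientAddGroup.mk' (smulRange (l ^ n) N) with hπ'
  set v : Fin r → N ⧸ smulRange (l ^ n) N := fun i => π' (y i) with hv
  have hli : LinearIndependent (ZMod (l ^ n)) v := by
    rw [Fintype.linearIndependent_iff]
    intro g hg i
    choose c hcc using fun i => ZMod.intCast_surjective (g i)
    have h0 : π' (∑ i, c i • y i) = 0 := by
      rw [map_sum]
      simp_rw [map_zsmul]
      calc ∑ i, c i • π' (y i) = ∑ i, g i • v i := by
            refine Finset.sum_congr rfl fun j _ => ?_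
            rw [← hcc j, cast_smul_quot]
        _ = 0 := hg
    have hmem := (QuotientAddGroup.eq_zero_iff _).mp h0
    have hdvd := inj n c hmem i
    rw [← hcc i]
    rw [ZMod.intCast_zmod_eq_zero_iff_dvd]
    exact_mod_cast hdvd
  have hsp : ⊤ ≤ Submodule.span (ZMod (l ^ n)) (Set.range v) := by
    rintro q -
    obtain ⟨x, rfl⟩ := QuotientAddGroup.mk'_surjective (smulRange (l ^ n) N) q
    obtain ⟨c, z, hz⟩ := key n x
    have : π' x = ∑ i, ((c i : ZMod (l ^ n))) • v i := by
      rw [hz, map_add]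
      have h2 : π' ((l ^ n : ℕ) • z) = 0 :=
        (QuotientAddGroup.eq_zero_iff _).mpr ⟨z, rfl⟩
      rw [h2, add_zero, map_sum]
      refine Finset.sum_congr rfl fun i _ => ?_
      rw [map_zsmul, cast_smul_quot]
    rw [this]
    exact Submodule.sum_mem _ fun i _ =>
      Submodule.smul_mem _ _ (Submodule.subset_span ⟨i, rfl⟩)
  let cb : Module.Basis (Fin r) (ZMod (l ^ n)) (N ⧸ smulRange (l ^ n) N) := Module.Basis.mk hli hsp
  have hcb : ∀ i, cb i = (QuotientAddGroup.mk (y i) : N ⧸ smulRange (l ^ n) N) := by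
    intro i; rw [Module.Basis.mk_apply]; rfl
  refine ⟨⟨cb, hcb⟩, ?_⟩
  have hne : NeZero (l ^ n) := ⟨pow_ne_zero _ hl.ne_zero⟩
  have hcard := Nat.card_congr cb.equivFun.toEquiv
  rw [hcard, Nat.card_fun, Nat.card_zmod, Nat.card_eq_fintype_card, Fintype.card_fin,
    ← pow_mul]
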